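/- Suppose in addition that f is unimodal with mode 0 (f is nondecreasing on (−∞, 0] and nonincreasing on [0, ∞)). Then the function g(x) = ((1 − F(x))² + F(x)²)/f(x) is even (g(−x) = g(x) for all x), strictly increasing on [0, ∞), and strictly decreasing on (−∞, 0]; in particular g is increasing at x if and only if x > 0 and g attains its minimum at x = 0. -/

import Mathlib

/-- Suppose in addition that `f` is unimodal with mode
`0` (nondecreasing on `(−∞, 0]`, nonincreasing on `[0, ∞)`). Then
`g x = ((1 − F x)² + F x²)/f x` is even, strictly increasing on
`[0, ∞)`, strictly decreasing on `(−∞, 0]`; in particular `g` is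
increasing at `x` iff `x > 0` and `g` attains its minimum at
`x = 0`. -/
theorem avg_price_static_term (F f : ℝ → ℝ)
    (hF_deriv : ∀ x, HasDerivAt F (f x) x)
    (hf_cont : Continuous f)
    (hf_pos : ∀ x, 0 < f x)
    (hf_symm : ∀ x, f (-x) = f x)
    (hF_mono : Monotone F)
    (hF_bot : Filter.Tendsto F Filter.atBot (nhds 0))
    (hF_top : Filter.Tendsto F Filter.atTop (nhds 1))
    (hMHR : StrictMono (fun x => F x / f x))
    (hf_unimodal_left : MonotoneOn f (Set.Iic 0))
    (hf_unimodal_right : AntitoneOn f (Set.Ici 0)) :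
    (∀ x : ℝ, ((1 - F (-x)) ^ 2 + (F (-x)) ^ 2) / f (-x)
        = ((1 - F x) ^ 2 + (F x) ^ 2) / f x) ∧
    StrictMonoOn (fun x => ((1 - F x) ^ 2 + (F x) ^ 2) / f x) (Set.Ici 0) ∧
    StrictAntiOn (fun x => ((1 - F x) ^ 2 + (F x) ^ 2) / f x) (Set.Iic 0) ∧
    (∀ x : ℝ, ((1 - F 0) ^ 2 + (F 0) ^ 2) / f 0
        ≤ ((1 - F x) ^ 2 + (F x) ^ 2) / f x) := by
  -- H x = F x + F (-x) is constant
  have hHd : ∀ x : ℝ, HasDerivAt (fun x => F x + F (-x)) (f x + f (-x) * (-1)) x := by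
    intro x
    exact (hF_deriv x).add ((hF_deriv (-x)).comp x (hasDerivAt_neg x))
  have hHdiff : Differentiable ℝ (fun x => F x + F (-x)) := fun x => (hHd x).differentiableAt
  have hHderiv : ∀ x, deriv (fun x => F x + F (-x)) x = 0 := by
    intro x
    rw [(hHd x).deriv, hf_symm]; ring
  have hHconst : ∀ x : ℝ, F x + F (-x) = F 0 + F (-0) :=
    fun x => is_const_of_deriv_eq_zero hHdiff hHderiv x 0
  have hHlim : Filter.Tendsto (fun x => F x + F (-x)) Filter.atTop (nhds 1) := by
    have := hF_top.add (hF_bot.comp Filter.tendsto_neg_atTop_atBot)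
    simpa using this
  have hHlim' : Filter.Tendsto (fun x => F x + F (-x)) Filter.atTop
      (nhds (F 0 + F (-0))) := by
    rw [Filter.tendsto_congr hHconst]
    exact tendsto_const_nhds
  have hH1 : F 0 + F (-0) = 1 := tendsto_nhds_unique hHlim' hHlim
  have hF0 : F 0 = 1 / 2 := by
    rw [neg_zero] at hH1; linarith
  have hFneg : ∀ x : ℝ, F (-x) = 1 - F x := by
    intro x
    have := hHconst x
    rw [neg_zero] at this
    linarith
  have hFsm : StrictMono F := by
    apply strictMono_of_deriv_pos
    intro x
    rw [(hF_deriv x).deriv]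
    exact hf_pos x
  set g : ℝ → ℝ := fun x => ((1 - F x) ^ 2 + (F x) ^ 2) / f x with hg
  have heven : ∀ x : ℝ, g (-x) = g x := by
    intro x
    simp only [hg, hFneg, hf_symm]
    ring_nf
  have hmono : StrictMonoOn g (Set.Ici 0) := by
    intro x hx y hy hxy
    have hFx : 1 / 2 ≤ F x := hF0 ▸ hF_mono hx
    have hFxy : F x < F y := hFsm hxy
    have hNxpos : 0 < (1 - F x) ^ 2 + (F x) ^ 2 := by nlinarith
    have hN : (1 - F x) ^ 2 + (F x) ^ 2 < (1 - F y) ^ 2 + (F y) ^ 2 := by nlinarith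
    have hfle : f y ≤ f x := hf_unimodal_right hx hy hxy.le
    have h1 : ((1 - F x) ^ 2 + (F x) ^ 2) / f x < ((1 - F y) ^ 2 + (F y) ^ 2) / f y := by
      gcongr
      exact hf_pos y
    exact h1
  have hanti : StrictAntiOn g (Set.Iic 0) := by
    intro x hx y hy hxy
    have h1 : g (-y) < g (-x) :=
      hmono (Set.mem_Ici.2 (neg_nonneg.2 (Set.mem_Iic.1 hy))) (Set.mem_Ici.2 (neg_nonneg.2 (Set.mem_Iic.1 hx))) (by linarith)
    rwa [heven, heven] at h1
  refine ⟨heven, hmono, hanti, ?_⟩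
  intro x
  rcases le_or_gt 0 x with hx | hx
  · rcases eq_or_lt_of_le hx with h | h
    · rw [← h]
    · exact (hmono Set.self_mem_Ici hx h).le
  · have h1 : g 0 ≤ g (-x) := (hmono Set.self_mem_Ici (Set.mem_Ici.2 (neg_nonneg.2 hx.le)) (neg_pos.2 hx)).le
    rwa [heven] at h1
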